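/- Let σ², λ² be positive reals with 1 ≤ σ²/λ² ≤ c² for c ≥ 1, X ~ N(0,σ²), Y ~ N(0,λ²). Then for any measurable set S ⊂ ℝ: (1/c)·P[Y ∈ S] ≤ P[X ∈ S] ≤ c·P[Y ∈ S/c], where S/c = {x/c : x ∈ S}. -/

import Mathlib

open ProbabilityTheory MeasureTheory Real

lemma gauss_pdf_le {v1 v2 : NNReal} (h0 : 0 < v1) (h12 : v1 ≤ v2) (x : ℝ) :
    gaussianPDFReal 0 v1 x ≤ Real.sqrt ((v2 : ℝ) / (v1 : ℝ)) * gaussianPDFReal 0 v2 x := by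
  have hv1 : (0 : ℝ) < v1 := h0
  have hv2 : (0 : ℝ) < v2 := lt_of_lt_of_le hv1 h12
  have hpi : (0 : ℝ) < π := Real.pi_pos
  simp only [gaussianPDFReal, sub_zero]
  have hcoef : Real.sqrt ((v2 : ℝ) / (v1 : ℝ)) * (Real.sqrt (2 * π * v2))⁻¹
      = (Real.sqrt (2 * π * v1))⁻¹ := by
    rw [← Real.sqrt_inv, ← Real.sqrt_mul (by positivity)]
    congr 1
    field_simp
    rw [← Real.sqrt_mul (by positivity), one_div_mul_cancel (by positivity), Real.sqrt_one]
  calc (Real.sqrt (2 * π * v1))⁻¹ * rexp (-x ^ 2 / (2 * v1))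
      ≤ (Real.sqrt (2 * π * v1))⁻¹ * rexp (-x ^ 2 / (2 * v2)) := by
        apply mul_le_mul_of_nonneg_left _ (by positivity)
        apply Real.exp_le_exp.2
        rw [div_le_div_iff₀ (by positivity) (by positivity)]
        nlinarith [sq_nonneg x, hv1, hv2, NNReal.coe_le_coe.2 h12]
    _ = Real.sqrt ((v2 : ℝ) / (v1 : ℝ)) * ((Real.sqrt (2 * π * v2))⁻¹
          * rexp (-x ^ 2 / (2 * v2))) := by rw [← mul_assoc, hcoef]

lemma gauss_measure_le {v1 v2 : NNReal} (h0 : 0 < v1) (h12 : v1 ≤ v2) {k : ℝ}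
    (hk : Real.sqrt ((v2 : ℝ) / (v1 : ℝ)) ≤ k) (S : Set ℝ) :
    gaussianReal 0 v1 S ≤ ENNReal.ofReal k * gaussianReal 0 v2 S := by
  have hv1 : v1 ≠ 0 := h0.ne'
  have hv2 : v2 ≠ 0 := (lt_of_lt_of_le h0 h12).ne'
  have hk0 : 0 ≤ k := le_trans (Real.sqrt_nonneg _) hk
  rw [gaussianReal_apply 0 hv1, gaussianReal_apply 0 hv2, ← lintegral_const_mul _
    (measurable_gaussianPDF 0 v2)]
  refine lintegral_mono fun x => ?_
  rw [gaussianPDF, gaussianPDF, ← ENNReal.ofReal_mul hk0]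
  apply ENNReal.ofReal_le_ofReal
  calc gaussianPDFReal 0 v1 x
      ≤ Real.sqrt ((v2 : ℝ) / (v1 : ℝ)) * gaussianPDFReal 0 v2 x := gauss_pdf_le h0 h12 x
    _ ≤ k * gaussianPDFReal 0 v2 x :=
        mul_le_mul_of_nonneg_right hk (gaussianPDFReal_nonneg 0 v2 x)

/-- for `X ~ N(0,σ²)`, `Y ~ N(0,λ²)` with `1 ≤ σ²/λ² ≤ c²`, `c ≥ 1`,
and any measurable `S ⊆ ℝ`:
`(1/c)·P[Y ∈ S] ≤ P[X ∈ S] ≤ c·P[Y ∈ S/c]` where `S/c = {x/c : x ∈ S}`. -/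
theorem gaussian_prob_ratio_close
    (s2 l2 : NNReal) (c : NNReal)
    (hs : 0 < s2) (hl : 0 < l2) (hc : 1 ≤ c)
    (h1 : 1 ≤ (s2 : ℝ) / (l2 : ℝ)) (h2 : (s2 : ℝ) / (l2 : ℝ) ≤ (c : ℝ) ^ 2)
    (S : Set ℝ) (hS : MeasurableSet S) :
    ENNReal.ofReal (1 / (c : ℝ)) * gaussianReal 0 l2 S ≤ gaussianReal 0 s2 S ∧
    gaussianReal 0 s2 S ≤
      ENNReal.ofReal (c : ℝ) * gaussianReal 0 l2 ((fun x : ℝ => x / (c : ℝ)) '' S) := by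
  have hl' : (0 : ℝ) < l2 := hl
  have hs' : (0 : ℝ) < s2 := hs
  have hc' : (0 : ℝ) < c := lt_of_lt_of_le one_pos hc
  have hls : l2 ≤ s2 := by
    rw [← NNReal.coe_le_coe]
    nlinarith [(one_le_div hl').1 h1]
  constructor
  · -- first inequality
    have key : gaussianReal 0 l2 S ≤ ENNReal.ofReal (c : ℝ) * gaussianReal 0 s2 S := by
      apply gauss_measure_le hl hls
      rw [show (c : ℝ) = Real.sqrt ((c : ℝ) ^ 2) from (Real.sqrt_sq hc'.le).symm]
      exact Real.sqrt_le_sqrt h2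
    calc ENNReal.ofReal (1 / (c : ℝ)) * gaussianReal 0 l2 S
        ≤ ENNReal.ofReal (1 / (c : ℝ)) * (ENNReal.ofReal (c : ℝ) * gaussianReal 0 s2 S) :=
          mul_le_mul_right key _
      _ = gaussianReal 0 s2 S := by
          rw [← mul_assoc, ← ENNReal.ofReal_mul (by positivity)]
          rw [one_div, inv_mul_cancel₀ hc'.ne', ENNReal.ofReal_one, one_mul]
  · -- second inequality
    have hmap : gaussianReal 0 (c ^ 2 * l2) S
        = gaussianReal 0 l2 ((fun x : ℝ => x / (c : ℝ)) '' S) := by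
      have h2' : ∀ h, (NNReal.mk ((c : ℝ) ^ 2) h) = c ^ 2 := fun h => by
        ext; simp
      have := gaussianReal_map_const_mul (μ := 0) (v := l2) (c : ℝ)
      rw [h2', mul_zero] at this
      rw [← this, Measure.map_apply (measurable_id'.const_mul _) hS]
      congr 1
      ext x
      constructor
      · intro hx
        exact ⟨(c : ℝ) * x, hx, by field_simp⟩
      · rintro ⟨y, hy, rfl⟩
        simpa [mul_div_cancel₀ _ hc'.ne'] using hy
    rw [← hmap]
    apply gauss_measure_le hs
    · rw [← NNReal.coe_le_coe]
      push_cast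
      nlinarith [(div_le_iff₀ hl').1 h2]
    · rw [show (c : ℝ) = Real.sqrt ((c : ℝ) ^ 2) from (Real.sqrt_sq hc'.le).symm]
      apply Real.sqrt_le_sqrt
      push_cast
      rw [div_le_iff₀ hs']
      nlinarith [(one_le_div hl').1 h1]
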